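/- Let n be a positive integer and let H = {0,...,n/2−1} if n is even, H = {0,...,n−1} if n is odd. If h ∈ H satisfies {h − ∑_{p|d} n/p}_n < n − n/γ(n) for every divisor d of γ(n), then ∑_{d | n} μ(d) c_n(h + n/γ(n) − ∑_{p|d} n/p) = 0. -/

import Mathlib

open Polynomial Finset

/-- The Ramanujan sum `c_n(r) = ∑_{1 ≤ j ≤ n, gcd(j,n)=1} e^{2πijr/n}`. -/
noncomputable def ramanujanSum (n : ℕ) (r : ℤ) : ℂ :=
  ∑ j ∈ Finset.Icc 1 n, if Nat.gcd j n = 1 then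
    Complex.exp (2 * (Real.pi : ℂ) * Complex.I * (j : ℂ) * (r : ℂ) / (n : ℂ)) else 0

section Aux

noncomputable def eN (n : ℕ) (x : ℤ) : ℂ :=
  Complex.exp (2 * (Real.pi : ℂ) * Complex.I * (x : ℂ) / (n : ℂ))

lemma eN_add (n : ℕ) (x y : ℤ) : eN n (x + y) = eN n x * eN n y := by
  unfold eN; rw [← Complex.exp_add]; congr 1; push_cast; ring

lemma eN_dvd {n : ℕ} (hn : n ≠ 0) {x : ℤ} (hx : (n : ℤ) ∣ x) : eN n x = 1 := by
  obtain ⟨k, rfl⟩ := hx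
  unfold eN
  have hn' : (n : ℂ) ≠ 0 := Nat.cast_ne_zero.2 hn
  have : 2 * (Real.pi : ℂ) * Complex.I * (((n : ℤ) * k : ℤ) : ℂ) / (n : ℂ)
      = (k : ℂ) * (2 * (Real.pi : ℂ) * Complex.I) := by
    push_cast; field_simp
  rw [this, Complex.exp_int_mul_two_pi_mul_I]

lemma eN_nat_mul (n : ℕ) (j : ℕ) (x : ℤ) : eN n ((j : ℤ) * x) = (eN n x) ^ j := by
  unfold eN
  rw [← Complex.exp_nat_mul]
  congr 1
  push_cast
  ring

lemma eN_geom {n : ℕ} (hn : n ≠ 0) {r : ℤ} (hr : ¬ (n : ℤ) ∣ r) :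
    ∑ j ∈ range n, eN n ((j : ℤ) * r) = 0 := by
  have hn' : (n : ℂ) ≠ 0 := Nat.cast_ne_zero.2 hn
  have hx : eN n r ≠ 1 := by
    intro he
    unfold eN at he
    rw [Complex.exp_eq_one_iff] at he
    obtain ⟨k, hk⟩ := he
    apply hr ⟨k, ?_⟩
    have h2 : (2 * (Real.pi : ℂ) * Complex.I) ≠ 0 := Complex.two_pi_I_ne_zero
    have : (r : ℂ) = (n : ℂ) * (k : ℂ) := by
      field_simp at hk
      apply mul_right_cancel₀ h2
      linear_combination (2 * (Real.pi : ℂ) * Complex.I) * hk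
    exact_mod_cast this
  calc ∑ j ∈ range n, eN n ((j : ℤ) * r) = ∑ j ∈ range n, (eN n r) ^ j := by
        exact Finset.sum_congr rfl fun j _ => eN_nat_mul n j r
    _ = ((eN n r) ^ n - 1) / (eN n r - 1) := geom_sum_eq hx n
    _ = 0 := by
        rw [← eN_nat_mul n n r, eN_dvd hn ⟨r, by push_cast; ring⟩]
        simp

noncomputable def tt (n : ℕ) (d : ℕ) : ℤ := ∑ p ∈ d.primeFactors, ((n / p : ℕ) : ℤ)

lemma squarefree_prod_primes {s : Finset ℕ} (hs : ∀ p ∈ s, p.Prime) :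
    Squarefree (∏ p ∈ s, p) := by
  classical
  induction s using Finset.induction_on with
  | empty => simpa using squarefree_one
  | @insert p s hp ih =>
    rw [Finset.prod_insert hp]
    have hpp := hs p (mem_insert_self _ _)
    have hs' : ∀ q ∈ s, q.Prime := fun q hq => hs q (mem_insert_of_mem hq)
    have hcop : Nat.Coprime p (∏ q ∈ s, q) := by
      refine Nat.Coprime.prod_right fun q hq => ?_
      exact (Nat.coprime_primes hpp (hs' q hq)).2 (by rintro rfl; exact hp hq)
    exact (Nat.squarefree_mul hcop).2 ⟨hpp.squarefree, ih hs'⟩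

lemma moebius_sum_eq_prod (n : ℕ) (hn : n ≠ 0) (z : ℤ) :
    ∑ d ∈ n.divisors, ((ArithmeticFunction.moebius d : ℤ) : ℂ) * eN n (z * tt n d)
      = ∏ p ∈ n.primeFactors, (1 - eN n (z * ((n / p : ℕ) : ℤ))) := by
  classical
  set γ := ∏ p ∈ n.primeFactors, p with hγdef
  have hγsf : Squarefree γ := squarefree_prod_primes fun p hp => Nat.prime_of_mem_primeFactors hp
  have hγdvd : γ ∣ n := Nat.prod_primeFactors_dvd n
  have hγ0 : γ ≠ 0 := hγsf.ne_zero
  let F : ArithmeticFunction ℂ :=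
    ⟨fun d => if d = 0 then 0 else eN n (z * tt n d), by simp⟩
  have hF : ∀ d : ℕ, d ≠ 0 → F d = eN n (z * tt n d) := fun d hd => if_neg hd
  have hFmult : F.IsMultiplicative := by
    constructor
    · show F 1 = 1
      rw [hF 1 one_ne_zero]
      simp [tt, eN]
    · intro a b hab
      rcases eq_or_ne a 0 with rfl | ha
      · have hb1 : b = 1 := by simpa using hab
        subst hb1; simp [F]
      rcases eq_or_ne b 0 with rfl | hb
      · have ha1 : a = 1 := by simpa using hab
        subst ha1; simp [F]
      rw [hF _ (mul_ne_zero ha hb), hF _ ha, hF _ hb, ← eN_add]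
      congr 1
      have hsum : tt n (a * b) = tt n a + tt n b := by
        unfold tt
        rw [Nat.primeFactors_mul ha hb,
          Finset.sum_union (Nat.Coprime.disjoint_primeFactors hab)]
      rw [hsum, mul_add]
  calc ∑ d ∈ n.divisors, ((ArithmeticFunction.moebius d : ℤ) : ℂ) * eN n (z * tt n d)
      = ∑ d ∈ γ.divisors, ((ArithmeticFunction.moebius d : ℤ) : ℂ) * F d := by
        rw [← Finset.sum_subset (Nat.divisors_subset_of_dvd hn hγdvd)]
        · refine Finset.sum_congr rfl fun d hd => ?_
          rw [hF d (Nat.pos_of_mem_divisors hd).ne']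
        · intro d hd hd'
          have hdsf : ¬ Squarefree d := by
            intro hsf
            apply hd'
            rw [Nat.mem_divisors]
            refine ⟨?_, hγ0⟩
            calc d = ∏ p ∈ d.primeFactors, p := (Nat.prod_primeFactors_of_squarefree hsf).symm
              _ ∣ γ := Finset.prod_dvd_prod_of_subset _ _ _
                  (Nat.primeFactors_mono (Nat.dvd_of_mem_divisors hd) hn)
          rw [ArithmeticFunction.moebius_eq_zero_of_not_squarefree hdsf]
          simp
    _ = ∏ p ∈ γ.primeFactors, (1 - F p) :=
        (ArithmeticFunction.IsMultiplicative.prodPrimeFactors_one_sub_of_squarefree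
          F hFmult hγsf).symm
    _ = ∏ p ∈ n.primeFactors, (1 - eN n (z * ((n / p : ℕ) : ℤ))) := by
        rw [hγdef, Nat.primeFactors_prod fun p hp => Nat.prime_of_mem_primeFactors hp]
        refine Finset.prod_congr rfl fun p hp => ?_
        have hp' := Nat.prime_of_mem_primeFactors hp
        rw [hF p hp'.ne_zero]
        congr 2
        unfold tt
        rw [hp'.primeFactors, Finset.sum_singleton]

lemma prod_eq_zero_of_not_coprime {n : ℕ} (hn : n ≠ 0) {j : ℕ} (hj : Nat.gcd j n ≠ 1) :
    ∏ p ∈ n.primeFactors, (1 - eN n ((-(j : ℤ)) * ((n / p : ℕ) : ℤ))) = 0 := by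
  obtain ⟨p, hp, hpdvd⟩ := Nat.exists_prime_and_dvd hj
  have hpn : p ∣ n := hpdvd.trans (Nat.gcd_dvd_right j n)
  have hpj : p ∣ j := hpdvd.trans (Nat.gcd_dvd_left j n)
  have hpmem : p ∈ n.primeFactors := Nat.mem_primeFactors.2 ⟨hp, hpn, hn⟩
  apply Finset.prod_eq_zero hpmem
  have hnat : j * (n / p) = n * (j / p) := by
    calc j * (n / p) = j / p * p * (n / p) := by rw [Nat.div_mul_cancel hpj]
      _ = j / p * (p * (n / p)) := by ring
      _ = n * (j / p) := by rw [Nat.mul_div_cancel' hpn]; ring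
  have hcast := congrArg (Nat.cast : ℕ → ℤ) hnat
  rw [Nat.cast_mul, Nat.cast_mul] at hcast
  have : eN n ((-(j : ℤ)) * ((n / p : ℕ) : ℤ)) = 1 := by
    apply eN_dvd hn
    exact ⟨-((j / p : ℕ) : ℤ), by linear_combination -hcast⟩
  rw [this]
  ring

lemma key (n : ℕ) (hn2 : 1 < n) (a : ℤ)
    (hdvd : ∀ d ∈ n.divisors, Squarefree d → ¬ (n : ℤ) ∣ (a - tt n d)) :
    ∑ d ∈ n.divisors, ((ArithmeticFunction.moebius d : ℤ) : ℂ) *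
      ramanujanSum n (a - tt n d) = 0 := by
  have hn0 : n ≠ 0 := by omega
  have hne1 : ∀ j : ℕ, Nat.gcd j n ≠ 1 →
      (∑ d ∈ n.divisors, ((ArithmeticFunction.moebius d : ℤ) : ℂ) *
        eN n ((j : ℤ) * (a - tt n d))) = 0 := by
    intro j hj
    calc ∑ d ∈ n.divisors, ((ArithmeticFunction.moebius d : ℤ) : ℂ) *
          eN n ((j : ℤ) * (a - tt n d))
        = eN n ((j : ℤ) * a) * ∑ d ∈ n.divisors,
            ((ArithmeticFunction.moebius d : ℤ) : ℂ) * eN n ((-(j : ℤ)) * tt n d) := by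
          rw [Finset.mul_sum]
          refine Finset.sum_congr rfl fun d _ => ?_
          rw [show (j : ℤ) * (a - tt n d) = (j : ℤ) * a + (-(j : ℤ)) * tt n d by ring,
            eN_add]
          ring
      _ = eN n ((j : ℤ) * a) *
            ∏ p ∈ n.primeFactors, (1 - eN n ((-(j : ℤ)) * ((n / p : ℕ) : ℤ))) := by
          rw [moebius_sum_eq_prod n hn0]
      _ = 0 := by rw [prod_eq_zero_of_not_coprime hn0 hj, mul_zero]
  calc ∑ d ∈ n.divisors, ((ArithmeticFunction.moebius d : ℤ) : ℂ) *
        ramanujanSum n (a - tt n d)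
      = ∑ d ∈ n.divisors, ∑ j ∈ Icc 1 n, (if Nat.gcd j n = 1 then
          ((ArithmeticFunction.moebius d : ℤ) : ℂ) * eN n ((j : ℤ) * (a - tt n d)) else 0) := by
        refine Finset.sum_congr rfl fun d _ => ?_
        rw [ramanujanSum, Finset.mul_sum]
        refine Finset.sum_congr rfl fun j _ => ?_
        rw [mul_ite, mul_zero]
        refine if_congr Iff.rfl ?_ rfl
        congr 1
        unfold eN
        congr 1
        push_cast
        ring
    _ = ∑ j ∈ Icc 1 n, (if Nat.gcd j n = 1 then
          (∑ d ∈ n.divisors, ((ArithmeticFunction.moebius d : ℤ) : ℂ) *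
            eN n ((j : ℤ) * (a - tt n d))) else 0) := by
        rw [Finset.sum_comm]
        exact Finset.sum_congr rfl fun j _ => by
          rw [Finset.sum_ite_irrel, Finset.sum_const_zero]
    _ = ∑ j ∈ Icc 1 n, (∑ d ∈ n.divisors, ((ArithmeticFunction.moebius d : ℤ) : ℂ) *
          eN n ((j : ℤ) * (a - tt n d))) := by
        refine Finset.sum_congr rfl fun j _ => ?_
        split_ifs with hc
        · rfl
        · exact (hne1 j hc).symm
    _ = ∑ j ∈ range n, (∑ d ∈ n.divisors, ((ArithmeticFunction.moebius d : ℤ) : ℂ) *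
          eN n ((j : ℤ) * (a - tt n d))) := by
        have e1 : ∑ j ∈ Icc 1 n, (∑ d ∈ n.divisors, ((ArithmeticFunction.moebius d : ℤ) : ℂ) *
            eN n ((j : ℤ) * (a - tt n d)))
            = ∑ j ∈ Ico 1 n, (∑ d ∈ n.divisors, ((ArithmeticFunction.moebius d : ℤ) : ℂ) *
            eN n ((j : ℤ) * (a - tt n d))) := by
          rw [← Finset.Ico_add_one_right_eq_Icc, Finset.sum_Ico_succ_top (by omega),
            hne1 n (by rw [Nat.gcd_self]; omega), add_zero]
        have e2 : ∑ j ∈ range n, (∑ d ∈ n.divisors, ((ArithmeticFunction.moebius d : ℤ) : ℂ) *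
            eN n ((j : ℤ) * (a - tt n d)))
            = ∑ j ∈ Ico 1 n, (∑ d ∈ n.divisors, ((ArithmeticFunction.moebius d : ℤ) : ℂ) *
            eN n ((j : ℤ) * (a - tt n d))) := by
          rw [Finset.range_eq_Ico, Finset.sum_eq_sum_Ico_succ_bot (by omega),
            hne1 0 (by rw [Nat.gcd_zero_left]; omega), zero_add]
        rw [e1, e2]
    _ = ∑ d ∈ n.divisors, ((ArithmeticFunction.moebius d : ℤ) : ℂ) *
          ∑ j ∈ range n, eN n ((j : ℤ) * (a - tt n d)) := by
        rw [Finset.sum_comm]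
        exact Finset.sum_congr rfl fun d _ => (Finset.mul_sum _ _ _).symm
    _ = 0 := by
        refine Finset.sum_eq_zero fun d hd => ?_
        rcases eq_or_ne (ArithmeticFunction.moebius d) 0 with hz | hz
        · rw [hz]; simp
        · rw [eN_geom hn0
            (hdvd d hd (ArithmeticFunction.moebius_ne_zero_iff_squarefree.1 hz)), mul_zero]

end Aux

theorem ramanujan_sum_vanishing (n : ℕ) (hn : 1 ≤ n) (h : ℕ)
    (hH : h < if Even n then n / 2 else n)
    (hres : ∀ d ∈ (∏ p ∈ n.primeFactors, p).divisors,
      (((h : ℤ) - ∑ p ∈ d.primeFactors, ((n / p : ℕ) : ℤ)) % (n : ℤ)).toNat <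
        n - n / (∏ p ∈ n.primeFactors, p)) :
    ∑ d ∈ n.divisors, (ArithmeticFunction.moebius d : ℂ) *
        ramanujanSum n
          ((h : ℤ) + ((n / (∏ p ∈ n.primeFactors, p) : ℕ) : ℤ) -
            ∑ p ∈ d.primeFactors, ((n / p : ℕ) : ℤ)) = 0 := by
  rcases eq_or_lt_of_le hn with heq | hn2
  · exfalso
    subst heq
    have h1 := hres 1 (by simp)
    simp at h1
  · have hn0 : n ≠ 0 := by omega
    set γ := ∏ p ∈ n.primeFactors, p with hγdef
    have hγsf : Squarefree γ :=
      squarefree_prod_primes fun p hp => Nat.prime_of_mem_primeFactors hp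
    have hγdvd : γ ∣ n := Nat.prod_primeFactors_dvd n
    have hγ0 : γ ≠ 0 := hγsf.ne_zero
    have hγ1 : 1 < γ := by
      obtain ⟨p, hp⟩ := (Nat.nonempty_primeFactors).2 hn2
      have hpd : p ∣ γ := Finset.dvd_prod_of_mem _ hp
      have h2 := (Nat.prime_of_mem_primeFactors hp).two_le
      have h3 := Nat.le_of_dvd (Nat.pos_of_ne_zero hγ0) hpd
      omega
    have hm1 : 1 ≤ n / γ := (Nat.one_le_div_iff (by omega)).2 (Nat.le_of_dvd (by omega) hγdvd)
    have hmlt : n / γ < n := Nat.div_lt_self (by omega) hγ1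
    refine key n hn2 ((h : ℤ) + ((n / γ : ℕ) : ℤ)) ?_
    intro d hd hdsf hdvdint
    have hdγ : d ∈ γ.divisors := by
      rw [Nat.mem_divisors]
      refine ⟨?_, hγ0⟩
      calc d = ∏ p ∈ d.primeFactors, p := (Nat.prod_primeFactors_of_squarefree hdsf).symm
        _ ∣ γ := Finset.prod_dvd_prod_of_subset _ _ _
            (Nat.primeFactors_mono (Nat.dvd_of_mem_divisors hd) hn0)
    have hlt := hres d hdγ
    simp only [tt] at hdvdint
    obtain ⟨k, hk⟩ := hdvdint
    generalize hgen : n / γ = m at hlt hm1 hmlt hk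
    have hmod : ((h : ℤ) - ∑ p ∈ d.primeFactors, ((n / p : ℕ) : ℤ)) % (n : ℤ)
        = (n : ℤ) - ((m : ℕ) : ℤ) := by
      have h1 : (h : ℤ) - ∑ p ∈ d.primeFactors, ((n / p : ℕ) : ℤ)
          = ((n : ℤ) - ((m : ℕ) : ℤ)) + (n : ℤ) * (k - 1) := by linarith [hk]
      rw [h1, Int.add_mul_emod_self_left, Int.emod_eq_of_lt (by omega) (by omega)]
    rw [hmod] at hlt
    omega
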